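/- Let U be a finite set and C_1, …, C_m ⊆ U (m ≥ 1) with ⋃_{i=1}^m C_i = U, and let G be the graph of the Maximum Coverage reduction built from this instance. Then for every set S ⊆ I ⊎ U of vertices with 1 ≤ |S| = k ≤ m, there exists a set S′ ⊆ I consisting only of index vertices, with |S′| = k, such that N(S′) ∪ S′ ⊇ N(S) ∪ S, and hence |N(S′)| ≥ |N(S)| (equivalently, the expansion |N(S′)|/|S′| is at least |N(S)|/|S|). (This is the claim in the proof of Proposition 1 that any sample meeting U can be replaced, without loss of expansion, by replacing each element of S ∩ U with one of its neighbors in I.) -/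

import Mathlib

open Finset

/-- The neighborhood `N(S)` of a set of vertices `S`: all vertices outside `S`
adjacent to some vertex of `S`. -/
def nbhd {V : Type*} [Fintype V] [DecidableEq V] (G : SimpleGraph V) [DecidableRel G.Adj]
    (S : Finset V) : Finset V :=
  Finset.univ.filter fun w => w ∉ S ∧ ∃ v ∈ S, G.Adj v w

/-- The graph of the Maximum Coverage reduction: vertex set `I ⊎ U` with
`I = Fin m` a clique of index vertices, `U` an independent set, and an edge
between index vertex `i` and element `u` exactly when `u ∈ C i`. -/
def redGraph {U : Type*} [DecidableEq U] (m : ℕ) (C : Fin m → Finset U) :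
    SimpleGraph (Fin m ⊕ U) where
  Adj x y := match x, y with
    | Sum.inl i, Sum.inl j => i ≠ j
    | Sum.inl i, Sum.inr u => u ∈ C i
    | Sum.inr u, Sum.inl i => u ∈ C i
    | Sum.inr _, Sum.inr _ => False
  symm := by
    refine ⟨?_⟩
    rintro (i | u) (j | w) h
    · exact h.symm
    · exact h
    · exact h
    · exact h
  loopless := by
    refine ⟨?_⟩
    rintro (i | u) h
    · exact h rfl
    · exact h

instance {U : Type*} [DecidableEq U] (m : ℕ) (C : Fin m → Finset U) :
    DecidableRel (redGraph m C).Adj := fun x y =>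
  match x, y with
  | Sum.inl i, Sum.inl j => inferInstanceAs (Decidable (i ≠ j))
  | Sum.inl i, Sum.inr u => inferInstanceAs (Decidable (u ∈ C i))
  | Sum.inr u, Sum.inl i => inferInstanceAs (Decidable (u ∈ C i))
  | Sum.inr _, Sum.inr _ => inferInstanceAs (Decidable False)

/-- **Replacement step in the proof of Proposition 1.** Any sample `S` of the reduction
graph with `1 ≤ |S| = k ≤ m` can be replaced by a set `S' = T.image Sum.inl` of `k` index
vertices whose closed coverage `N(S') ∪ S'` contains `N(S) ∪ S`, and hence
`|N(S')| ≥ |N(S)|`. -/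
theorem reduction_replace {U : Type*} [Fintype U] [DecidableEq U]
    (m k : ℕ) (hm : 1 ≤ m) (C : Fin m → Finset U)
    (hU : ∀ u : U, ∃ i : Fin m, u ∈ C i)
    (S : Finset (Fin m ⊕ U)) (hk : 1 ≤ k) (hS : S.card = k) (hkm : k ≤ m) :
    ∃ T : Finset (Fin m), T.card = k ∧
      nbhd (redGraph m C) S ∪ S ⊆
        nbhd (redGraph m C) (T.image Sum.inl) ∪ T.image Sum.inl ∧
      (nbhd (redGraph m C) S).card ≤ (nbhd (redGraph m C) (T.image Sum.inl)).card := by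
  classical
  set f : (Fin m ⊕ U) → Fin m := fun x => match x with
    | Sum.inl i => i
    | Sum.inr u => (hU u).choose with hf
  have hT0 : (S.image f).card ≤ k := hS ▸ Finset.card_image_le
  obtain ⟨T, hsub, hTcard⟩ := Finset.exists_superset_card_eq hT0
    (by simpa using hkm)
  have hsub' : ∀ x ∈ S, f x ∈ T := fun x hx => hsub (Finset.mem_image_of_mem f hx)
  have hTne : T.Nonempty := Finset.card_pos.mp (hTcard ▸ hk)
  have hnotmem : ∀ u : U, (Sum.inr u : Fin m ⊕ U) ∉ T.image Sum.inl := by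
    intro u h
    obtain ⟨i, _, hi⟩ := Finset.mem_image.mp h
    exact Sum.inl_ne_inr hi
  have hclosed : ∀ x, x ∈ nbhd (redGraph m C) S ∪ S →
      x ∈ nbhd (redGraph m C) (T.image Sum.inl) ∪ T.image Sum.inl := by
    rintro (j | u) hx
    · by_cases hj : j ∈ T
      · exact Finset.mem_union_right _ (Finset.mem_image_of_mem _ hj)
      · obtain ⟨i, hi⟩ := hTne
        refine Finset.mem_union_left _ ?_
        simp only [nbhd, Finset.mem_filter, Finset.mem_univ, true_and]
        refine ⟨fun h => ?_, Sum.inl i, Finset.mem_image_of_mem _ hi, ?_⟩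
        · obtain ⟨i', _, hi'⟩ := Finset.mem_image.mp h
          exact hj (Sum.inl.inj hi' ▸ ‹i' ∈ T›)
        · show i ≠ j
          rintro rfl; exact hj hi
    · -- u : U; find i ∈ T with u ∈ C i
      have : ∃ i ∈ T, u ∈ C i := by
        rcases Finset.mem_union.mp hx with hx | hx
        · simp only [nbhd, Finset.mem_filter, Finset.mem_univ, true_and] at hx
          obtain ⟨_, v, hv, hadj⟩ := hx
          cases v with
          | inl i => exact ⟨i, hsub' _ hv, hadj⟩
          | inr w => exact absurd hadj (by simp [redGraph])
        · refine ⟨f (Sum.inr u), hsub' _ hx, ?_⟩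
          exact (hU u).choose_spec
      obtain ⟨i, hiT, hiC⟩ := this
      refine Finset.mem_union_left _ ?_
      simp only [nbhd, Finset.mem_filter, Finset.mem_univ, true_and]
      exact ⟨hnotmem u, Sum.inl i, Finset.mem_image_of_mem _ hiT, hiC⟩
  refine ⟨T, hTcard, hclosed, ?_⟩
  have hdisj1 : Disjoint (nbhd (redGraph m C) S) S := by
    simp only [Finset.disjoint_left, nbhd, Finset.mem_filter]
    rintro a ⟨_, ha, _⟩ ha'
    exact ha ha'
  have hdisj2 : Disjoint (nbhd (redGraph m C) (T.image Sum.inl)) (T.image Sum.inl) := by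
    simp only [Finset.disjoint_left, nbhd, Finset.mem_filter]
    rintro a ⟨_, ha, _⟩ ha'
    exact ha ha'
  have hcard : (T.image (Sum.inl : Fin m → Fin m ⊕ U)).card = k := by
    rw [Finset.card_image_of_injective T (fun a b h => Sum.inl.inj h), hTcard]
  have h1 := Finset.card_le_card hclosed
  rw [Finset.card_union_of_disjoint hdisj1, Finset.card_union_of_disjoint hdisj2,
    hS, hcard] at h1
  omega
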